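/- Let D ≥ 1, M ≥ 1, and let p = (p_α)_{α∈ℤ₊^D} be a probability mass function on ℤ₊^D with p_α > 0 for every α. Let A_1,…,A_M be i.i.d. ℤ₊^D-valued random variables with law p and set N_α := #{1 ≤ i ≤ M : A_i = α}. For each α ∈ ℤ₊^D and each n ≥ 1 let F_α^n be a square-integrable real-valued random variable with E[F_α^n] = μ_α for all n ≥ 1, with F_α^0 := 0, such that the families (F_α^n)_{n≥1} for distinct α are mutually independent and independent of (A_1,…,A_M). Suppose there are constants V_α ≥ 0 with E[(F_α^n − μ_α)²] ≤ V_α/n for all n ≥ 1, μ_α² ≤ V_α for all α, Σ_α V_α/p_α < ∞ and Σ_α √V_α < ∞. Then the randomized multi-index estimator F̂ := Σ_{α∈ℤ₊^D} (N_α/(M p_α)) F_α^{N_α} is square-integrable and satisfies E[(F̂ − Σ_α μ_α)²] ≤ (4/M)·( Σ_{α∈ℤ₊^D} V_α/p_α + ( Σ_{α∈ℤ₊^D} √V_α )² ). -/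

import Mathlib

open MeasureTheory ProbabilityTheory Finset Filter
open scoped Classical Topology ENNReal NNReal

section helpers

variable {Ω : Type*} [MeasurableSpace Ω] {μ : Measure Ω}

lemma my_integrable_mul {f g : Ω → ℝ} (hf : MemLp f 2 μ) (hg : MemLp g 2 μ) :
    Integrable (fun ω => f ω * g ω) μ := by
  refine Integrable.mono' (hf.integrable_sq.add hg.integrable_sq)
    (hf.aestronglyMeasurable.mul hg.aestronglyMeasurable)
    (Filter.Eventually.of_forall fun ω => ?_)
  simp only [Real.norm_eq_abs, Pi.add_apply]
  nlinarith [sq_nonneg (|f ω| - |g ω|), abs_mul (f ω) (g ω), sq_abs (f ω), sq_abs (g ω),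
    abs_nonneg (f ω), abs_nonneg (g ω)]

variable {ι : Type*} [MeasurableSpace ι] [MeasurableSingletonClass ι] [DecidableEq ι]

/-- second moments of the multinomial counts -/
lemma count_moment [IsProbabilityMeasure μ] {M : ℕ}
    (p : ι → ℝ) (hp : ∀ α, 0 ≤ p α)
    (A : Fin M → Ω → ι) (hAmeas : ∀ i, Measurable (A i))
    (hAiid : iIndepFun A μ)
    (hAlaw : ∀ i α, μ (A i ⁻¹' {α}) = ENNReal.ofReal (p α)) (α β : ι) :
    ∫ ω, (((univ.filter fun i => A i ω = α).card : ℝ) *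
      ((univ.filter fun i => A i ω = β).card : ℝ)) ∂μ
      = (if α = β then (M : ℝ) * p α else 0) + (M : ℝ) * ((M : ℝ) - 1) * (p α * p β) := by
  have hind : ∀ (i : Fin M) (γ : ι), Integrable ((A i ⁻¹' {γ}).indicator (1 : Ω → ℝ)) μ :=
    fun i γ => (integrable_const (1 : ℝ)).indicator (hAmeas i (measurableSet_singleton γ))
  have hcard : ∀ (γ : ι) ω, (((univ.filter fun i => A i ω = γ).card : ℝ))
      = ∑ i : Fin M, (A i ⁻¹' {γ}).indicator (1 : Ω → ℝ) ω := by
    intro γ ω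
    rw [Finset.card_filter]
    push_cast
    refine Finset.sum_congr rfl fun i _ => ?_
    by_cases h : A i ω = γ <;> simp [Set.indicator, h]
  have key : ∀ (i j : Fin M), ∫ ω, ((A i ⁻¹' {α}).indicator (1 : Ω → ℝ) ω *
      (A j ⁻¹' {β}).indicator (1 : Ω → ℝ) ω) ∂μ
      = if i = j then (if α = β then p α else 0) else p α * p β := by
    intro i j
    have hprod : ∀ ω, (A i ⁻¹' {α}).indicator (1 : Ω → ℝ) ω *
        (A j ⁻¹' {β}).indicator (1 : Ω → ℝ) ω
        = ((A i ⁻¹' {α}) ∩ (A j ⁻¹' {β})).indicator (1 : Ω → ℝ) ω := by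
      intro ω
      by_cases h1 : ω ∈ A i ⁻¹' {α} <;> by_cases h2 : ω ∈ A j ⁻¹' {β} <;>
        simp [Set.indicator, h1, h2, Set.mem_inter_iff]
    simp only [hprod]
    rw [integral_indicator_one ((hAmeas i (measurableSet_singleton α)).inter
      (hAmeas j (measurableSet_singleton β)))]
    rcases eq_or_ne i j with rfl | hij
    · rcases eq_or_ne α β with rfl | hab
      · simp [Set.inter_self, measureReal_def, hAlaw, ENNReal.toReal_ofReal (hp α)]
      · have : (A i ⁻¹' {α}) ∩ (A i ⁻¹' {β}) = ∅ := by
          ext ω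
          simp only [Set.mem_inter_iff, Set.mem_preimage, Set.mem_singleton_iff,
            Set.mem_empty_iff_false, iff_false]
          rintro ⟨h1, h2⟩
          exact hab (h1.symm.trans h2)
        simp [this, hab]
    · rw [if_neg hij, measureReal_def, (hAiid.indepFun hij).measure_inter_preimage_eq_mul _ _
        (measurableSet_singleton α) (measurableSet_singleton β), hAlaw, hAlaw,
        ← ENNReal.ofReal_mul (hp α), ENNReal.toReal_ofReal (mul_nonneg (hp α) (hp β))]
  calc ∫ ω, (((univ.filter fun i => A i ω = α).card : ℝ) *
      ((univ.filter fun i => A i ω = β).card : ℝ)) ∂μ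
      = ∫ ω, ∑ i : Fin M, ∑ j : Fin M, ((A i ⁻¹' {α}).indicator (1 : Ω → ℝ) ω *
          (A j ⁻¹' {β}).indicator (1 : Ω → ℝ) ω) ∂μ := by
        refine integral_congr_ae (Filter.Eventually.of_forall fun ω => ?_)
        simp only [hcard α, hcard β]
        rw [Finset.sum_mul_sum]
    _ = ∑ i : Fin M, ∑ j : Fin M, ∫ ω, ((A i ⁻¹' {α}).indicator (1 : Ω → ℝ) ω *
          (A j ⁻¹' {β}).indicator (1 : Ω → ℝ) ω) ∂μ := by
        rw [integral_finset_sum]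
        · exact Finset.sum_congr rfl fun i _ => integral_finset_sum _ fun j _ =>
            my_integrable_mul (MemLp.indicator (hAmeas i (measurableSet_singleton α)) (memLp_const 1))
              (MemLp.indicator (hAmeas j (measurableSet_singleton β)) (memLp_const 1))
        · exact fun i _ => integrable_finset_sum _ fun j _ =>
            my_integrable_mul (MemLp.indicator (hAmeas i (measurableSet_singleton α)) (memLp_const 1))
              (MemLp.indicator (hAmeas j (measurableSet_singleton β)) (memLp_const 1))
    _ = ∑ i : Fin M, ∑ j : Fin M, (if i = j then (if α = β then p α else 0) else p α * p β) := by
        exact Finset.sum_congr rfl fun i _ => Finset.sum_congr rfl fun j _ => key i j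
    _ = (if α = β then (M : ℝ) * p α else 0) + (M : ℝ) * ((M : ℝ) - 1) * (p α * p β) := by
        have step : ∀ i : Fin M, (∑ j : Fin M, if i = j then (if α = β then p α else 0)
            else p α * p β) = (if α = β then p α else 0) + ((M : ℝ) - 1) * (p α * p β) := by
          intro i
          have h1 : ∀ j : Fin M, (if i = j then (if α = β then p α else 0) else p α * p β)
              = (p α * p β) + (if i = j then (if α = β then p α else 0) - p α * p β else 0) := by
            intro j; by_cases h : i = j <;> simp [h]
          simp only [h1, Finset.sum_add_distrib, Finset.sum_const, Finset.sum_ite_eq,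
            card_univ, Fintype.card_fin, nsmul_eq_mul, Finset.mem_univ, if_true]
          ring
        rw [Finset.sum_congr rfl (fun i _ => step i), Finset.sum_const, card_univ,
          Fintype.card_fin, nsmul_eq_mul]
        by_cases h : α = β <;> simp [h] <;> ring

/-- first moment of the counts -/
lemma count_mean [IsProbabilityMeasure μ] {M : ℕ}
    (p : ι → ℝ) (hp : ∀ α, 0 ≤ p α)
    (A : Fin M → Ω → ι) (hAmeas : ∀ i, Measurable (A i))
    (hAlaw : ∀ i α, μ (A i ⁻¹' {α}) = ENNReal.ofReal (p α)) (α : ι) :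
    ∫ ω, ((univ.filter fun i => A i ω = α).card : ℝ) ∂μ = (M : ℝ) * p α := by
  have hcard : ∀ ω, (((univ.filter fun i => A i ω = α).card : ℝ))
      = ∑ i : Fin M, (A i ⁻¹' {α}).indicator (1 : Ω → ℝ) ω := by
    intro ω
    rw [Finset.card_filter]
    push_cast
    refine Finset.sum_congr rfl fun i _ => ?_
    by_cases h : A i ω = α <;> simp [Set.indicator, h]
  have hind : ∀ (i : Fin M), Integrable ((A i ⁻¹' {α}).indicator (1 : Ω → ℝ)) μ :=
    fun i => (integrable_const (1 : ℝ)).indicator (hAmeas i (measurableSet_singleton α))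
  rw [integral_congr_ae (Filter.Eventually.of_forall hcard),
    integral_finset_sum _ (fun i _ => hind i)]
  simp only [integral_indicator_one (hAmeas _ (measurableSet_singleton α)), measureReal_def, hAlaw,
    ENNReal.toReal_ofReal (hp α), Finset.sum_const, card_univ, Fintype.card_fin, nsmul_eq_mul]

end helpers

/-- variance bound for the randomized multi-index estimator.
Indices `A 1, …, A M` are drawn i.i.d. from a positive pmf `p` on `ℤ₊^D`;
`N α` counts the draws equal to `α`; the estimators `F α n` (for `n ≥ 1`) are
square-integrable with mean `m α` independent of `n`, `F α 0 = 0`, the families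
`(F α n)_n` for distinct `α` are mutually independent and independent of the
draws. If `E[(F α n - m α)²] ≤ V α / n`, `(m α)² ≤ V α`, `Σ_α V α / p α < ∞`
and `Σ_α √(V α) < ∞`, then `F̂ = Σ_α (N α / (M p α)) F α (N α)` is
square-integrable and
`E[(F̂ - Σ_α m α)²] ≤ (4/M)(Σ_α V α / p α + (Σ_α √(V α))²)`. -/
theorem rMIMC_variance_bound {Ω : Type*} [MeasurableSpace Ω]
    (μ : Measure Ω) [IsProbabilityMeasure μ]
    (D M : ℕ) (hD : 1 ≤ D) (hM : 1 ≤ M)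
    (p : (Fin D → ℕ) → ℝ) (hp : ∀ α, 0 < p α) (hpsum : ∑' α, p α = 1)
    (A : Fin M → Ω → (Fin D → ℕ)) (hAmeas : ∀ i, Measurable (A i))
    (hAiid : iIndepFun A μ)
    (hAlaw : ∀ i α, μ (A i ⁻¹' {α}) = ENNReal.ofReal (p α))
    (F : (Fin D → ℕ) → ℕ → Ω → ℝ)
    (hFL2 : ∀ α n, MemLp (F α n) 2 μ)
    (hF0 : ∀ α ω, F α 0 ω = 0)
    (m : (Fin D → ℕ) → ℝ)
    (hFmean : ∀ α, ∀ n, 1 ≤ n → (∫ ω, F α n ω ∂μ) = m α)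
    (hFiIndep : iIndepFun
      (fun α : Fin D → ℕ => fun ω => fun n : ℕ => F α n ω) μ)
    (hFindepA : IndepFun (fun ω => fun q : (Fin D → ℕ) × ℕ => F q.1 q.2 ω)
      (fun ω => fun i : Fin M => A i ω) μ)
    (V : (Fin D → ℕ) → ℝ) (hV0 : ∀ α, 0 ≤ V α)
    (hVar : ∀ α, ∀ n, 1 ≤ n →
      (∫ ω, (F α n ω - m α) ^ 2 ∂μ) ≤ V α / n)
    (hmV : ∀ α, m α ^ 2 ≤ V α)
    (hVp : Summable (fun α : Fin D → ℕ => V α / p α))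
    (hVsqrt : Summable (fun α : Fin D → ℕ => Real.sqrt (V α)))
    (N : (Fin D → ℕ) → Ω → ℕ)
    (hN : ∀ α ω, N α ω = (Finset.univ.filter (fun i : Fin M => A i ω = α)).card)
    (Fhat : Ω → ℝ)
    (hFhat : ∀ ω, Fhat ω = ∑' α : Fin D → ℕ,
      ((N α ω : ℝ) / (M * p α)) * F α (N α ω) ω) :
    MemLp Fhat 2 μ ∧
      (∫ ω, (Fhat ω - ∑' α : Fin D → ℕ, m α) ^ 2 ∂μ) ≤
        (4 / M) * ((∑' α : Fin D → ℕ, V α / p α) +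
          (∑' α : Fin D → ℕ, Real.sqrt (V α)) ^ 2) := by
  classical
  -- basic positivity
  have hMpos : (0 : ℝ) < M := by exact_mod_cast hM
  have hMp : ∀ α, (0 : ℝ) < M * p α := fun α => mul_pos hMpos (hp α)
  -- measurability of N
  have hbigAmeas : Measurable (fun ω => fun i : Fin M => A i ω) :=
    measurable_pi_lambda _ hAmeas
  have hNmeas : ∀ α, Measurable (N α) := by
    intro α
    have : N α = (fun a : Fin M → (Fin D → ℕ) =>
        (Finset.univ.filter (fun i : Fin M => a i = α)).card) ∘ (fun ω => fun i => A i ω) := by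
      funext ω; simp [hN]
    rw [this]
    exact (measurable_of_countable _).comp hbigAmeas
  have hBmeas : ∀ (α : Fin D → ℕ) (n : ℕ), MeasurableSet {ω | N α ω = n} := by
    intro α n
    exact hNmeas α (measurableSet_singleton n)
  have hNle : ∀ α ω, N α ω ≤ M := by
    intro α ω
    rw [hN]
    exact le_trans (Finset.card_filter_le _ _) (by simp)
  -- indicator-of-bigA factorization
  have hfactor : ∀ (B : Set Ω) (S : Set (Fin M → (Fin D → ℕ))),
      (∀ ω, ω ∈ B ↔ (fun i : Fin M => A i ω) ∈ S) →
      ∀ (φ : ((Fin D → ℕ) × ℕ → ℝ) → ℝ),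
      Measurable φ → AEStronglyMeasurable (fun ω => φ (fun q => F q.1 q.2 ω)) μ →
      ∫ ω, B.indicator (fun _ => (1 : ℝ)) ω * φ (fun q => F q.1 q.2 ω) ∂μ
        = (μ B).toReal * ∫ ω, φ (fun q => F q.1 q.2 ω) ∂μ := by
    intro B S hiff φ hφ hφm
    have hBeq : B = (fun ω => fun i : Fin M => A i ω) ⁻¹' S := Set.ext hiff
    have hψ : Measurable (S.indicator (fun _ => (1 : ℝ))) := measurable_of_countable _
    have hindep := (hFindepA.symm.comp hψ hφ).integral_fun_mul_eq_mul_integral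
      ((hψ.comp hbigAmeas).aestronglyMeasurable) hφm
    have h1 : ∀ ω, S.indicator (fun _ => (1:ℝ)) (fun i : Fin M => A i ω)
        = B.indicator (fun _ => (1:ℝ)) ω := by
      intro ω
      by_cases h : (fun i : Fin M => A i ω) ∈ S
      · rw [Set.indicator_of_mem h, Set.indicator_of_mem ((hiff ω).mpr h)]
      · rw [Set.indicator_of_notMem h, Set.indicator_of_notMem (fun hc => h ((hiff ω).mp hc))]
    have hBmeas' : MeasurableSet B := by
      rw [hBeq]; exact hbigAmeas (MeasurableSet.of_discrete (s := S))
    have h2 : ∫ ω, S.indicator (fun _ => (1:ℝ)) (fun i : Fin M => A i ω) ∂μ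
        = (μ B).toReal :=
      (integral_congr_ae (Filter.Eventually.of_forall
        (fun ω => h1 ω))).trans (integral_indicator_one hBmeas')
    calc ∫ ω, B.indicator (fun _ => (1 : ℝ)) ω * φ (fun q => F q.1 q.2 ω) ∂μ
        = ∫ ω, (S.indicator (fun _ => (1:ℝ)) (fun i : Fin M => A i ω)) *
            φ (fun q => F q.1 q.2 ω) ∂μ :=
          integral_congr_ae (Filter.Eventually.of_forall
            (fun ω => by simp only [← h1 ω]))
      _ = (∫ ω, S.indicator (fun _ => (1:ℝ)) (fun i : Fin M => A i ω) ∂μ) *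
            ∫ ω, φ (fun q => F q.1 q.2 ω) ∂μ := hindep
      _ = _ := by rw [h2]
  -- integrability of F
  have hFint : ∀ α n, Integrable (F α n) μ := fun α n => (hFL2 α n).integrable one_le_two
  have hmean0 : ∀ α n, 1 ≤ n → ∫ ω, (F α n ω - m α) ∂μ = 0 := by
    intro α n hn
    rw [integral_sub (hFint α n) (integrable_const _), hFmean α n hn, integral_const]
    simp
  have hcross0 : ∀ (α β : Fin D → ℕ), α ≠ β → ∀ n n', 1 ≤ n → 1 ≤ n' →
      ∫ ω, (F α n ω - m α) * (F β n' ω - m β) ∂μ = 0 := by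
    intro α β hne n n' hn hn'
    have h1 : Measurable (fun g : ℕ → ℝ => g n - m α) :=
      (measurable_pi_apply n).sub measurable_const
    have h2 : Measurable (fun g : ℕ → ℝ => g n' - m β) :=
      (measurable_pi_apply n').sub measurable_const
    have hmul := ((hFiIndep.indepFun hne).comp h1 h2).integral_fun_mul_eq_mul_integral
      (((hFL2 α n).sub (memLp_const (m α))).aestronglyMeasurable)
      (((hFL2 β n').sub (memLp_const (m β))).aestronglyMeasurable)
    have heq : (∫ ω, (F α n ω - m α) * (F β n' ω - m β) ∂μ)
        = (∫ ω, (F α n ω - m α) ∂μ) * ∫ ω, (F β n' ω - m β) ∂μ := hmul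
    rw [heq, hmean0 α n hn, hmean0 β n' hn', mul_zero]
  -- the elementary summands
  set c : (Fin D → ℕ) → ℕ → ℝ := fun α n => (n : ℝ) / (M * p α) with hcdef
  set X : (Fin D → ℕ) → Ω → ℝ := fun α ω => c α (N α ω) * (F α (N α ω) ω - m α) with hXdef
  set Y : (Fin D → ℕ) → Ω → ℝ :=
    fun α ω => (m α / (M * p α)) * ((N α ω : ℝ) - M * p α) with hYdef
  -- representation of X as a finite sum of indicator terms
  have hXrep : ∀ α, X α = fun ω => ∑ n ∈ range (M + 1),
      ({ω' | N α ω' = n}.indicator (fun ω' => c α n * (F α n ω' - m α)) ω) := by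
    intro α
    funext ω
    rw [Finset.sum_eq_single (N α ω)]
    · rw [Set.indicator_of_mem (by exact rfl : ω ∈ {ω' | N α ω' = N α ω})]
    · intro b _ hb
      exact Set.indicator_of_notMem (fun hmem => hb (by exact hmem.symm ▸ rfl)) _
    · intro habs
      exact absurd (Finset.mem_range.mpr (Nat.lt_succ_of_le (hNle α ω))) habs
  have hterm2 : ∀ α n, MemLp (fun ω' => c α n * (F α n ω' - m α)) 2 μ :=
    fun α n => (((hFL2 α n).sub (memLp_const (m α))).const_mul (c α n))
  have hXL2 : ∀ α, MemLp (X α) 2 μ := by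
    intro α
    rw [hXrep α]
    exact memLp_finset_sum _ (fun n _ => MemLp.indicator (hBmeas α n) (hterm2 α n))
  -- Nr as sum of indicators
  have hNrep : ∀ α, (fun ω => (N α ω : ℝ))
      = fun ω => ∑ i : Fin M, (A i ⁻¹' {α}).indicator (fun _ => (1 : ℝ)) ω := by
    intro α
    funext ω
    rw [hN, Finset.card_filter]
    push_cast
    refine Finset.sum_congr rfl fun i _ => ?_
    by_cases h : A i ω = α <;> simp [Set.indicator, h]
  have hNrL2 : ∀ α, MemLp (fun ω => (N α ω : ℝ)) 2 μ := by
    intro α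
    rw [hNrep α]
    exact memLp_finset_sum _ (fun i _ =>
      MemLp.indicator (hAmeas i (measurableSet_singleton α)) (memLp_const 1))
  have hYL2 : ∀ α, MemLp (Y α) 2 μ :=
    fun α => (((hNrL2 α).sub (memLp_const _)).const_mul _)
  -- moments of the counts
  have hNmean : ∀ α, ∫ ω, (N α ω : ℝ) ∂μ = M * p α := by
    intro α
    simp only [hN]
    exact count_mean p (fun γ => (hp γ).le) A hAmeas hAlaw α
  have hK : ∀ α β, ∫ ω, (N α ω : ℝ) * (N β ω : ℝ) ∂μ
      = (if α = β then (M : ℝ) * p α else 0) + (M : ℝ) * ((M : ℝ) - 1) * (p α * p β) := by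
    intro α β
    simp only [hN]
    exact count_moment p (fun γ => (hp γ).le) A hAmeas hAiid hAlaw α β
  -- Σ_{n ≤ M} n P(N = n) = M p
  have hnPn : ∀ α, ∑ n ∈ range (M + 1), (n : ℝ) * (μ {ω | N α ω = n}).toReal = M * p α := by
    intro α
    have h1 : ∀ ω : Ω, (N α ω : ℝ) = ∑ n ∈ range (M + 1),
        ({ω' | N α ω' = n}.indicator (fun _ => (n : ℝ)) ω) := by
      intro ω
      rw [Finset.sum_eq_single (N α ω)]
      · rw [Set.indicator_of_mem (by exact rfl : ω ∈ {ω' | N α ω' = N α ω})]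
      · intro b _ hb
        exact Set.indicator_of_notMem (fun hmem => hb (by exact hmem.symm ▸ rfl)) _
      · intro habs
        exact absurd (Finset.mem_range.mpr (Nat.lt_succ_of_le (hNle α ω))) habs
    have h2 : ∫ ω, (N α ω : ℝ) ∂μ = ∑ n ∈ range (M + 1),
        (μ {ω' | N α ω' = n}).toReal * (n : ℝ) := by
      rw [integral_congr_ae (Filter.Eventually.of_forall h1),
        integral_finset_sum _ (fun n _ => (integrable_const ((n : ℕ) : ℝ)).indicator (hBmeas α n))]
      exact Finset.sum_congr rfl fun n _ => by
        rw [integral_indicator_const _ (hBmeas α n), smul_eq_mul, measureReal_def]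
    rw [← hNmean α, h2]
    exact Finset.sum_congr rfl fun n _ => mul_comm _ _
  -- integrability helpers
  have hIndMul : ∀ (s : Set Ω), MeasurableSet s → ∀ (g : Ω → ℝ), Integrable g μ →
      Integrable (fun ω => s.indicator (fun _ => (1:ℝ)) ω * g ω) μ := by
    intro s hs g hg
    have heq : (fun ω => s.indicator (fun _ => (1:ℝ)) ω * g ω) = s.indicator g := by
      funext ω; by_cases h : ω ∈ s <;> simp [Set.indicator, h]
    rw [heq]; exact hg.indicator hs
  have hsqint : ∀ α n, Integrable (fun ω => (F α n ω - m α) ^ 2) μ :=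
    fun α n => ((hFL2 α n).sub (memLp_const (m α))).integrable_sq
  -- diagonal bound for X
  have hXd : ∀ α, ∫ ω, X α ω ^ 2 ∂μ ≤ V α / (M * p α) := by
    intro α
    have hsq : ∀ ω, X α ω ^ 2 = ∑ n ∈ range (M + 1),
        ({ω' | N α ω' = n}.indicator (fun _ => (1:ℝ)) ω) *
          (c α n ^ 2 * (F α n ω - m α) ^ 2) := by
      intro ω
      rw [Finset.sum_eq_single (N α ω)]
      · rw [Set.indicator_of_mem (by exact rfl : ω ∈ {ω' | N α ω' = N α ω})]
        show (c α (N α ω) * (F α (N α ω) ω - m α)) ^ 2 = _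
        ring
      · intro b _ hb
        rw [Set.indicator_of_notMem (fun hmem => hb (by exact hmem.symm ▸ rfl)), zero_mul]
      · intro habs
        exact absurd (Finset.mem_range.mpr (Nat.lt_succ_of_le (hNle α ω))) habs
    have hint : ∀ n ∈ range (M + 1),
        Integrable (fun ω => ({ω' | N α ω' = n}.indicator (fun _ => (1:ℝ)) ω) *
          (c α n ^ 2 * (F α n ω - m α) ^ 2)) μ :=
      fun n _ => hIndMul _ (hBmeas α n) _ ((hsqint α n).const_mul _)
    rw [integral_congr_ae (Filter.Eventually.of_forall hsq), integral_finset_sum _ hint]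
    have hterm : ∀ n ∈ range (M + 1),
        (∫ ω, ({ω' | N α ω' = n}.indicator (fun _ => (1:ℝ)) ω) *
          (c α n ^ 2 * (F α n ω - m α) ^ 2) ∂μ)
        = c α n ^ 2 * ((μ {ω' | N α ω' = n}).toReal * ∫ ω, (F α n ω - m α) ^ 2 ∂μ) := by
      intro n _
      have h1 : (fun ω => ({ω' | N α ω' = n}.indicator (fun _ => (1:ℝ)) ω) *
          (c α n ^ 2 * (F α n ω - m α) ^ 2))
          = fun ω => c α n ^ 2 * (({ω' | N α ω' = n}.indicator (fun _ => (1:ℝ)) ω) *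
            ((F α n ω - m α) ^ 2)) := by funext ω; ring
      rw [h1, integral_const_mul]
      congr 1
      exact hfactor {ω' | N α ω' = n}
        {a : Fin M → (Fin D → ℕ) | (Finset.univ.filter fun i => a i = α).card = n}
        (fun ω => by simp [hN]) (fun v => (v (α, n) - m α) ^ 2)
        (((measurable_pi_apply (α, n)).sub measurable_const).pow_const 2)
        (hsqint α n).aestronglyMeasurable
    rw [Finset.sum_congr rfl hterm]
    have hbound : ∀ n ∈ range (M + 1),
        c α n ^ 2 * ((μ {ω' | N α ω' = n}).toReal * ∫ ω, (F α n ω - m α) ^ 2 ∂μ)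
          ≤ V α / (M * p α) ^ 2 * ((n : ℝ) * (μ {ω' | N α ω' = n}).toReal) := by
      intro n _
      rcases Nat.eq_zero_or_pos n with rfl | hn
      · simp [hcdef]
      · have hPn0 : (0:ℝ) ≤ (μ {ω' | N α ω' = n}).toReal := ENNReal.toReal_nonneg
        have hn0 : ((n : ℕ) : ℝ) ≠ 0 := Nat.cast_ne_zero.mpr hn.ne'
        have hIn := hVar α n hn
        calc c α n ^ 2 * ((μ {ω' | N α ω' = n}).toReal * ∫ ω, (F α n ω - m α) ^ 2 ∂μ)
            ≤ c α n ^ 2 * ((μ {ω' | N α ω' = n}).toReal * (V α / n)) := by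
              exact mul_le_mul_of_nonneg_left
                (mul_le_mul_of_nonneg_left hIn hPn0) (sq_nonneg _)
          _ = V α / (M * p α) ^ 2 * ((n : ℝ) * (μ {ω' | N α ω' = n}).toReal) := by
              have hM0 : (M:ℝ) ≠ 0 := ne_of_gt hMpos
              have hp0 : p α ≠ 0 := ne_of_gt (hp α)
              rw [hcdef]
              field_simp
    calc ∑ n ∈ range (M + 1),
        c α n ^ 2 * ((μ {ω' | N α ω' = n}).toReal * ∫ ω, (F α n ω - m α) ^ 2 ∂μ)
        ≤ ∑ n ∈ range (M + 1),
          V α / (M * p α) ^ 2 * ((n : ℝ) * (μ {ω' | N α ω' = n}).toReal) :=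
          Finset.sum_le_sum hbound
      _ = V α / (M * p α) ^ 2 * (M * p α) := by rw [← Finset.mul_sum, hnPn α]
      _ = V α / (M * p α) := by
          rw [pow_two, ← div_div, div_mul_cancel₀ _ (ne_of_gt (hMp α))]
  -- cross terms for X vanish
  have hXX : ∀ α β, α ≠ β → ∫ ω, X α ω * X β ω ∂μ = 0 := by
    intro α β hne
    have hrep : ∀ ω, X α ω * X β ω = ∑ n ∈ range (M + 1), ∑ n' ∈ range (M + 1),
        (({ω' | N α ω' = n} ∩ {ω' | N β ω' = n'}).indicator (fun _ => (1:ℝ)) ω) *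
          ((c α n * c β n') * ((F α n ω - m α) * (F β n' ω - m β))) := by
      intro ω
      rw [Finset.sum_eq_single (N α ω)]
      · rw [Finset.sum_eq_single (N β ω)]
        · have hmem : ω ∈ ({ω' | N α ω' = N α ω} ∩ {ω' | N β ω' = N β ω} : Set Ω) :=
            ⟨rfl, rfl⟩
          rw [Set.indicator_of_mem hmem]
          show (c α (N α ω) * (F α (N α ω) ω - m α)) *
            (c β (N β ω) * (F β (N β ω) ω - m β)) = _
          ring
        · intro b _ hb
          rw [Set.indicator_of_notMem (fun hmem => hb hmem.2.symm), zero_mul]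
        · intro habs
          exact absurd (Finset.mem_range.mpr (Nat.lt_succ_of_le (hNle β ω))) habs
      · intro b _ hb
        refine Finset.sum_eq_zero fun n' _ => ?_
        rw [Set.indicator_of_notMem (fun hmem => hb hmem.1.symm), zero_mul]
      · intro habs
        exact absurd (Finset.mem_range.mpr (Nat.lt_succ_of_le (hNle α ω))) habs
    have hint : ∀ (n n' : ℕ),
        Integrable (fun ω => (({ω' | N α ω' = n} ∩ {ω' | N β ω' = n'}).indicator
          (fun _ => (1:ℝ)) ω) * ((c α n * c β n') *
            ((F α n ω - m α) * (F β n' ω - m β)))) μ :=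
      fun n n' => hIndMul _ ((hBmeas α n).inter (hBmeas β n')) _
        ((my_integrable_mul ((hFL2 α n).sub (memLp_const (m α)))
          ((hFL2 β n').sub (memLp_const (m β)))).const_mul _)
    rw [integral_congr_ae (Filter.Eventually.of_forall hrep),
      integral_finset_sum _ (fun n _ => integrable_finset_sum _ (fun n' _ => hint n n'))]
    refine Finset.sum_eq_zero fun n hn => ?_
    rw [integral_finset_sum _ (fun n' _ => hint n n')]
    refine Finset.sum_eq_zero fun n' hn' => ?_
    rcases Nat.eq_zero_or_pos n with rfl | hn1
    · have hc0 : c α 0 = 0 := by simp [hcdef]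
      simp [hc0]
    rcases Nat.eq_zero_or_pos n' with rfl | hn1'
    · have hc0 : c β 0 = 0 := by simp [hcdef]
      simp [hc0]
    have h1 : (fun ω => (({ω' | N α ω' = n} ∩ {ω' | N β ω' = n'}).indicator
        (fun _ => (1:ℝ)) ω) * ((c α n * c β n') *
          ((F α n ω - m α) * (F β n' ω - m β))))
        = fun ω => (c α n * c β n') *
          ((({ω' | N α ω' = n} ∩ {ω' | N β ω' = n'}).indicator (fun _ => (1:ℝ)) ω) *
            ((F α n ω - m α) * (F β n' ω - m β))) := by
      funext ω; ring
    rw [h1, integral_const_mul,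
      hfactor ({ω' | N α ω' = n} ∩ {ω' | N β ω' = n'})
        ({a : Fin M → (Fin D → ℕ) | (Finset.univ.filter fun i => a i = α).card = n} ∩
          {a : Fin M → (Fin D → ℕ) | (Finset.univ.filter fun i => a i = β).card = n'})
        (fun ω => by simp [Set.mem_inter_iff, hN])
        (fun v => (v (α, n) - m α) * (v (β, n') - m β))
        (((measurable_pi_apply (α, n)).sub measurable_const).mul
          ((measurable_pi_apply (β, n')).sub measurable_const))
        ((((hFL2 α n).sub (memLp_const (m α))).aestronglyMeasurable).mul
          (((hFL2 β n').sub (memLp_const (m β))).aestronglyMeasurable)),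
      hcross0 α β hne n n' hn1 hn1', mul_zero, mul_zero]
  -- sum bound for X over a finite set
  have hXsum : ∀ s : Finset (Fin D → ℕ),
      ∫ ω, (∑ α ∈ s, X α ω) ^ 2 ∂μ ≤ (∑' α, V α / p α) / M := by
    intro s
    have hexp : ∀ ω, (∑ α ∈ s, X α ω) ^ 2 = ∑ α ∈ s, ∑ β ∈ s, X α ω * X β ω := by
      intro ω; rw [sq, Finset.sum_mul_sum]
    rw [integral_congr_ae (Filter.Eventually.of_forall hexp),
      integral_finset_sum _ (fun α _ => integrable_finset_sum _
        (fun β _ => my_integrable_mul (hXL2 α) (hXL2 β)))]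
    calc ∑ α ∈ s, ∫ ω, (∑ β ∈ s, X α ω * X β ω) ∂μ
        = ∑ α ∈ s, ∑ β ∈ s, ∫ ω, X α ω * X β ω ∂μ :=
          Finset.sum_congr rfl fun α _ => integral_finset_sum _
            (fun β _ => my_integrable_mul (hXL2 α) (hXL2 β))
      _ = ∑ α ∈ s, ∫ ω, X α ω * X α ω ∂μ :=
          Finset.sum_congr rfl fun α hα => Finset.sum_eq_single α
            (fun β _ hβ => hXX α β (Ne.symm hβ)) (fun habs => absurd hα habs)
      _ = ∑ α ∈ s, ∫ ω, X α ω ^ 2 ∂μ :=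
          Finset.sum_congr rfl fun α _ => integral_congr_ae
            (Filter.Eventually.of_forall fun ω => (pow_two (X α ω)).symm)
      _ ≤ ∑ α ∈ s, V α / (M * p α) := Finset.sum_le_sum fun α _ => hXd α
      _ = (∑ α ∈ s, V α / p α) / M := by
          rw [Finset.sum_div]
          exact Finset.sum_congr rfl fun α _ => by rw [div_div, mul_comm]
      _ ≤ (∑' α, V α / p α) / M :=
          (div_le_div_iff_of_pos_right hMpos).mpr
            (Summable.sum_le_tsum s (fun α _ => div_nonneg (hV0 α) (hp α).le) hVp)
  -- exact covariance for Y
  have hYY : ∀ α β, ∫ ω, Y α ω * Y β ω ∂μ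
      = (if α = β then m α ^ 2 / (M * p α) else 0) - m α * m β / M := by
    intro α β
    have hk : ∀ ω, Y α ω * Y β ω = (m α / (M * p α)) * (m β / (M * p β)) *
        ((N α ω : ℝ) * (N β ω : ℝ) - (M * p β) * (N α ω : ℝ)
          - (M * p α) * (N β ω : ℝ) + (M * p α) * (M * p β)) := by
      intro ω
      simp only [hYdef]
      ring
    have hint1 : Integrable (fun ω => (N α ω : ℝ) * (N β ω : ℝ)) μ :=
      my_integrable_mul (hNrL2 α) (hNrL2 β)
    have hint2 : Integrable (fun ω => (M : ℝ) * p β * (N α ω : ℝ)) μ :=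
      ((hNrL2 α).integrable one_le_two).const_mul _
    have hint3 : Integrable (fun ω => (M : ℝ) * p α * (N β ω : ℝ)) μ :=
      ((hNrL2 β).integrable one_le_two).const_mul _
    have hint12 : Integrable (fun ω => (N α ω : ℝ) * (N β ω : ℝ)
        - (M : ℝ) * p β * (N α ω : ℝ)) μ := hint1.sub hint2
    have hint123 : Integrable (fun ω => (N α ω : ℝ) * (N β ω : ℝ)
        - (M : ℝ) * p β * (N α ω : ℝ) - (M : ℝ) * p α * (N β ω : ℝ)) μ :=
      hint12.sub hint3
    rw [integral_congr_ae (Filter.Eventually.of_forall hk), integral_const_mul,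
      integral_add hint123 (integrable_const _),
      integral_sub hint12 hint3, integral_sub hint1 hint2,
      integral_const_mul, integral_const_mul, hK α β, hNmean α, hNmean β, integral_const]
    simp only [measure_univ, probReal_univ, ENNReal.toReal_one, smul_eq_mul, one_mul]
    have hM0 : (M : ℝ) ≠ 0 := ne_of_gt hMpos
    have hpa : p α ≠ 0 := ne_of_gt (hp α)
    have hpb : p β ≠ 0 := ne_of_gt (hp β)
    rcases eq_or_ne α β with rfl | hne
    · simp only [if_pos rfl, if_pos trivial]
      field_simp
      ring
    · simp only [if_neg hne]
      field_simp
      ring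
  -- sum bound for Y
  have hYsum : ∀ s : Finset (Fin D → ℕ),
      ∫ ω, (∑ α ∈ s, Y α ω) ^ 2 ∂μ ≤ (∑' α, V α / p α) / M := by
    intro s
    have hexp : ∀ ω, (∑ α ∈ s, Y α ω) ^ 2 = ∑ α ∈ s, ∑ β ∈ s, Y α ω * Y β ω := by
      intro ω; rw [sq, Finset.sum_mul_sum]
    rw [integral_congr_ae (Filter.Eventually.of_forall hexp),
      integral_finset_sum _ (fun α _ => integrable_finset_sum _
        (fun β _ => my_integrable_mul (hYL2 α) (hYL2 β)))]
    have hstep : ∑ α ∈ s, ∫ ω, (∑ β ∈ s, Y α ω * Y β ω) ∂μ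
        = ∑ α ∈ s, ∑ β ∈ s,
          ((if α = β then m α ^ 2 / (M * p α) else 0) - m α * m β / M) := by
      refine Finset.sum_congr rfl fun α _ => ?_
      rw [integral_finset_sum _ (fun β _ => my_integrable_mul (hYL2 α) (hYL2 β))]
      exact Finset.sum_congr rfl fun β _ => hYY α β
    rw [hstep]
    have hsplit : ∀ α, (∑ β ∈ s,
        ((if α = β then m α ^ 2 / (M * p α) else 0) - m α * m β / M))
        = (if α ∈ s then m α ^ 2 / (M * p α) else 0) - m α * (∑ β ∈ s, m β) / M := by
      intro α
      rw [Finset.sum_sub_distrib, Finset.sum_ite_eq]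
      congr 1
      rw [← Finset.sum_div, ← Finset.mul_sum]
    calc ∑ α ∈ s, ∑ β ∈ s,
        ((if α = β then m α ^ 2 / (M * p α) else 0) - m α * m β / M)
        = ∑ α ∈ s, ((if α ∈ s then m α ^ 2 / (M * p α) else 0)
            - m α * (∑ β ∈ s, m β) / M) := Finset.sum_congr rfl fun α _ => hsplit α
      _ = (∑ α ∈ s, m α ^ 2 / (M * p α))
          - (∑ α ∈ s, m α) * (∑ β ∈ s, m β) / M := by
          rw [Finset.sum_sub_distrib]
          congr 1
          · exact Finset.sum_congr rfl fun α hα => if_pos hα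
          · rw [← Finset.sum_div, ← Finset.sum_mul]
      _ ≤ ∑ α ∈ s, m α ^ 2 / (M * p α) := by
          have h0 : (0:ℝ) ≤ (∑ α ∈ s, m α) * (∑ β ∈ s, m β) / M :=
            div_nonneg (mul_self_nonneg _) hMpos.le
          linarith
      _ ≤ ∑ α ∈ s, V α / (M * p α) :=
          Finset.sum_le_sum fun α _ => (div_le_div_iff_of_pos_right (hMp α)).mpr (hmV α)
      _ = (∑ α ∈ s, V α / p α) / M := by
          rw [Finset.sum_div]
          exact Finset.sum_congr rfl fun α _ => by rw [div_div, mul_comm]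
      _ ≤ (∑' α, V α / p α) / M :=
          (div_le_div_iff_of_pos_right hMpos).mpr
            (Summable.sum_le_tsum s (fun α _ => div_nonneg (hV0 α) (hp α).le) hVp)
  -- combined finite-sum bound
  have hZsum : ∀ s : Finset (Fin D → ℕ),
      ∫ ω, (∑ α ∈ s, (X α ω + Y α ω)) ^ 2 ∂μ ≤ 4 / M * (∑' α, V α / p α) := by
    intro s
    have hXm : MemLp (fun ω => ∑ α ∈ s, X α ω) 2 μ :=
      memLp_finset_sum _ (fun α _ => hXL2 α)
    have hYm : MemLp (fun ω => ∑ α ∈ s, Y α ω) 2 μ :=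
      memLp_finset_sum _ (fun α _ => hYL2 α)
    have hZm : MemLp (fun ω => ∑ α ∈ s, (X α ω + Y α ω)) 2 μ :=
      memLp_finset_sum _ (fun α _ => (hXL2 α).add (hYL2 α))
    have hmono2 : ∀ ω, (∑ α ∈ s, (X α ω + Y α ω)) ^ 2
        ≤ 2 * (∑ α ∈ s, X α ω) ^ 2 + 2 * (∑ α ∈ s, Y α ω) ^ 2 := by
      intro ω
      rw [Finset.sum_add_distrib]
      nlinarith [sq_nonneg ((∑ α ∈ s, X α ω) - (∑ α ∈ s, Y α ω)),
        sq_nonneg ((∑ α ∈ s, X α ω) + (∑ α ∈ s, Y α ω))]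
    calc ∫ ω, (∑ α ∈ s, (X α ω + Y α ω)) ^ 2 ∂μ
        ≤ ∫ ω, (2 * (∑ α ∈ s, X α ω) ^ 2 + 2 * (∑ α ∈ s, Y α ω) ^ 2) ∂μ :=
          integral_mono hZm.integrable_sq
            (((hXm.integrable_sq).const_mul 2).add ((hYm.integrable_sq).const_mul 2)) hmono2
      _ = 2 * (∫ ω, (∑ α ∈ s, X α ω) ^ 2 ∂μ) + 2 * ∫ ω, (∑ α ∈ s, Y α ω) ^ 2 ∂μ := by
          rw [integral_add ((hXm.integrable_sq).const_mul 2)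
            ((hYm.integrable_sq).const_mul 2), integral_const_mul, integral_const_mul]
      _ ≤ 2 * ((∑' α, V α / p α) / M) + 2 * ((∑' α, V α / p α) / M) :=
          add_le_add (mul_le_mul_of_nonneg_left (hXsum s) (by norm_num))
            (mul_le_mul_of_nonneg_left (hYsum s) (by norm_num))
      _ = 4 / M * (∑' α, V α / p α) := by ring
  -- exhausting sequence of finite sets
  obtain ⟨g, hg⟩ := exists_surjective_nat (Fin D → ℕ)
  set sfin : ℕ → Finset (Fin D → ℕ) := fun k => (Finset.range k).image g with hsfindef
  have hsfmono : Monotone sfin :=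
    fun a b hab => Finset.image_subset_image (Finset.range_subset_range.mpr hab)
  have hexh : Filter.Tendsto sfin Filter.atTop Filter.atTop :=
    Filter.tendsto_atTop_finset_of_monotone hsfmono (fun α => by
      obtain ⟨k, hk⟩ := hg α
      exact ⟨k + 1, Finset.mem_image.mpr ⟨k, Finset.mem_range.mpr (Nat.lt_succ_self k), hk⟩⟩)
  -- summability of m
  have hmsum : Summable m := by
    refine Summable.of_abs (Summable.of_nonneg_of_le (fun α => abs_nonneg _)
      (fun α => ?_) hVsqrt)
    rw [← Real.sqrt_sq_eq_abs]
    exact Real.sqrt_le_sqrt (hmV α)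
  -- pointwise convergence of the partial sums
  have hZpt : ∀ ω, Filter.Tendsto (fun k => ∑ α ∈ sfin k, (X α ω + Y α ω))
      Filter.atTop (𝓝 (Fhat ω - ∑' α, m α)) := by
    intro ω
    have hZeq : ∀ α, X α ω + Y α ω
        = ((N α ω : ℝ) / (↑M * p α)) * F α (N α ω) ω - m α := by
      intro α
      have hM0 : (M : ℝ) ≠ 0 := ne_of_gt hMpos
      have hpa : p α ≠ 0 := ne_of_gt (hp α)
      simp only [hXdef, hYdef, hcdef]
      field_simp
      ring
    have hterm1 : HasSum (fun α => ((N α ω : ℝ) / (↑M * p α)) * F α (N α ω) ω) (Fhat ω) := by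
      have hvanish : ∀ α ∉ (Finset.univ.image (fun i : Fin M => A i ω)),
          ((N α ω : ℝ) / (↑M * p α)) * F α (N α ω) ω = 0 := by
        intro α hα
        have hN0 : N α ω = 0 := by
          rw [hN, Finset.card_eq_zero]
          refine Finset.filter_eq_empty_iff.mpr (fun i _ => fun h => hα ?_)
          exact Finset.mem_image.mpr ⟨i, Finset.mem_univ i, h⟩
        rw [hN0, hF0]
        simp
      have h0 := hasSum_sum_of_ne_finset_zero (L := SummationFilter.unconditional _) hvanish
      rw [hFhat ω]
      exact h0.summable.hasSum
    have h1 : Filter.Tendsto (fun k => ∑ α ∈ sfin k,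
        ((N α ω : ℝ) / (↑M * p α)) * F α (N α ω) ω) Filter.atTop (𝓝 (Fhat ω)) :=
      hterm1.comp hexh
    have h2 : Filter.Tendsto (fun k => ∑ α ∈ sfin k, m α) Filter.atTop
        (𝓝 (∑' α, m α)) := hmsum.hasSum.comp hexh
    refine (h1.sub h2).congr (fun k => ?_)
    rw [← Finset.sum_sub_distrib]
    exact Finset.sum_congr rfl fun α _ => (hZeq α).symm
  -- a.e. strong measurability of the limit
  have hGaesm : ∀ k : ℕ, AEStronglyMeasurable (fun ω => ∑ α ∈ sfin k, (X α ω + Y α ω)) μ :=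
    fun k => (memLp_finset_sum _ (fun α (_ : α ∈ sfin k) =>
      (hXL2 α).add (hYL2 α))).aestronglyMeasurable
  have hTaesm : AEStronglyMeasurable (fun ω => Fhat ω - ∑' α, m α) μ :=
    aestronglyMeasurable_of_tendsto_ae Filter.atTop hGaesm (ae_of_all _ hZpt)
  have hZm2 : ∀ k : ℕ, MemLp (fun ω => ∑ α ∈ sfin k, (X α ω + Y α ω)) 2 μ :=
    fun k => memLp_finset_sum _ (fun α _ => (hXL2 α).add (hYL2 α))
  -- Fatou
  have hfatou : ∫⁻ ω, ENNReal.ofReal ((Fhat ω - ∑' α, m α) ^ 2) ∂μ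
      ≤ ENNReal.ofReal (4 / M * (∑' α, V α / p α)) := by
    have hconv : ∀ ω, Filter.Tendsto
        (fun k => ENNReal.ofReal ((∑ α ∈ sfin k, (X α ω + Y α ω)) ^ 2)) Filter.atTop
        (𝓝 (ENNReal.ofReal ((Fhat ω - ∑' α, m α) ^ 2))) :=
      fun ω => (ENNReal.continuous_ofReal.tendsto _).comp ((hZpt ω).pow 2)
    calc ∫⁻ ω, ENNReal.ofReal ((Fhat ω - ∑' α, m α) ^ 2) ∂μ
        = ∫⁻ ω, Filter.liminf
            (fun k => ENNReal.ofReal ((∑ α ∈ sfin k, (X α ω + Y α ω)) ^ 2))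
            Filter.atTop ∂μ := lintegral_congr fun ω => ((hconv ω).liminf_eq).symm
      _ ≤ Filter.liminf (fun k => ∫⁻ ω, ENNReal.ofReal
            ((∑ α ∈ sfin k, (X α ω + Y α ω)) ^ 2) ∂μ) Filter.atTop :=
          lintegral_liminf_le' (fun k => ENNReal.measurable_ofReal.comp_aemeasurable
            (((hGaesm k).aemeasurable).pow_const 2))
      _ ≤ Filter.liminf (fun _ : ℕ => ENNReal.ofReal (4 / M * (∑' α, V α / p α)))
            Filter.atTop := by
          refine Filter.liminf_le_liminf (Filter.Eventually.of_forall fun k => ?_)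
          rw [← ofReal_integral_eq_lintegral_ofReal (hZm2 k).integrable_sq
            (Filter.Eventually.of_forall fun ω => sq_nonneg _)]
          exact ENNReal.ofReal_le_ofReal (hZsum (sfin k))
      _ = ENNReal.ofReal (4 / M * (∑' α, V α / p α)) := Filter.liminf_const _
  -- square integrability of the limit
  have hT2aesm : AEStronglyMeasurable (fun ω => (Fhat ω - ∑' α, m α) ^ 2) μ := by
    refine (hTaesm.mul hTaesm).congr (Filter.Eventually.of_forall fun ω => ?_)
    exact (pow_two _).symm
  have hTsq_int : Integrable (fun ω => (Fhat ω - ∑' α, m α) ^ 2) μ := by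
    refine ⟨hT2aesm, ?_⟩
    have heq : ∫⁻ ω, ‖(Fhat ω - ∑' α, m α) ^ 2‖ₑ ∂μ
        = ∫⁻ ω, ENNReal.ofReal ((Fhat ω - ∑' α, m α) ^ 2) ∂μ :=
      lintegral_congr fun ω => Real.enorm_eq_ofReal (sq_nonneg _)
    show (∫⁻ ω, ‖(Fhat ω - ∑' α, m α) ^ 2‖ₑ ∂μ) < ⊤
    rw [heq]
    exact lt_of_le_of_lt hfatou ENNReal.ofReal_lt_top
  have hmemT : MemLp (fun ω => Fhat ω - ∑' α, m α) 2 μ :=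
    (memLp_two_iff_integrable_sq hTaesm).mpr hTsq_int
  have ht0 : (0:ℝ) ≤ ∑' α, V α / p α :=
    tsum_nonneg fun α => div_nonneg (hV0 α) (hp α).le
  constructor
  · have hFe : Fhat = fun ω => (Fhat ω - ∑' α, m α) + ∑' α, m α := by
      funext ω; ring
    rw [hFe]
    exact hmemT.add (memLp_const _)
  · rw [integral_eq_lintegral_of_nonneg_ae
      (Filter.Eventually.of_forall fun ω => sq_nonneg _) hT2aesm]
    refine ENNReal.toReal_le_of_le_ofReal ?_ (hfatou.trans (ENNReal.ofReal_le_ofReal ?_))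
    · have h4M : (0:ℝ) ≤ 4 / M := by positivity
      exact mul_nonneg h4M (add_nonneg ht0 (sq_nonneg _))
    · exact mul_le_mul_of_nonneg_left (le_add_of_nonneg_right (sq_nonneg _)) (by positivity)
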